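/- arXiv:2510.04473 — 5 statements merged into one kernel-verified Lean document; each statement's English description precedes it below -/
import Mathlib

section
/- Let f : EuclideanSpace ℝ (Fin n) → ℝ be differentiable with ∇f Lipschitz continuous with constant L_g. Let x ∈ EuclideanSpace ℝ (Fin n), Δ > 0, β > 0, and let y_1, …, y_{n+1} ∈ EuclideanSpace ℝ (Fin n) satisfy ‖y_i − x‖ ≤ β·Δ for all i. Let M̂ be the (n+1)×(n+1) real matrix whose i-th row is (1, ((y_i − x)/Δ)_1, …, ((y_i − x)/Δ)_n), and assume M̂ is invertible. Let (c, ĝ_1, …, ĝ_n) := M̂⁻¹·(f(y_1), …, f(y_{n+1})), set g := (ĝ_1/Δ, …, ĝ_n/Δ), and define the linear model m(y) := c + ⟨g, y − x⟩. Then m is fully linear for f in B(x,Δ) with constants κ_mf = (L_g/2)·(1 + √n)·β²·‖M̂⁻¹‖_∞ + L_g/2 and κ_mg = 2·κ_mf. -/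
open scoped RealInnerProductSpace
open Metric

noncomputable section

/-- Matrix–vector multiplication as a map on Euclidean space. -/
def mulVecE {n : ℕ} (H : Matrix (Fin n) (Fin n) ℝ) (v : EuclideanSpace ℝ (Fin n)) :
    EuclideanSpace ℝ (Fin n) :=
  (EuclideanSpace.equiv (Fin n) ℝ).symm (H.mulVec (EuclideanSpace.equiv (Fin n) ℝ v))

/-- Operator 2-norm of a matrix (the norm induced by the Euclidean vector norm). -/
def opNorm {n : ℕ} (H : Matrix (Fin n) (Fin n) ℝ) : ℝ :=
  sSup {r : ℝ | ∃ v : EuclideanSpace ℝ (Fin n), ‖v‖ ≤ 1 ∧ r = ‖mulVecE H v‖}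

/-- Quadratic model about `x` with data `(c, g, H)`. -/
def qm {n : ℕ} (x : EuclideanSpace ℝ (Fin n)) (c : ℝ) (g : EuclideanSpace ℝ (Fin n))
    (H : Matrix (Fin n) (Fin n) ℝ) (y : EuclideanSpace ℝ (Fin n)) : ℝ :=
  c + ⟪g, y - x⟫ + (1 / 2) * ⟪y - x, mulVecE H (y - x)⟫

/-- `m` is a fully linear model for `f` on the closed ball `B(x, Δ)`. -/
def IsFullyLinear {n : ℕ} (f m : EuclideanSpace ℝ (Fin n) → ℝ)
    (x : EuclideanSpace ℝ (Fin n)) (Δ κmf κmg : ℝ) : Prop :=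
  ∀ y ∈ closedBall x Δ,
    |m y - f y| ≤ κmf * Δ ^ 2 ∧ ‖gradient m y - gradient f y‖ ≤ κmg * Δ

/-- `m` is a fully quadratic model for `f` on the closed ball `B(x, Δ)`. -/
def IsFullyQuadratic {n : ℕ} (f m : EuclideanSpace ℝ (Fin n) → ℝ)
    (x : EuclideanSpace ℝ (Fin n)) (Δ κmf κmg κmh : ℝ) : Prop :=
  ∀ y ∈ closedBall x Δ,
    |m y - f y| ≤ κmf * Δ ^ 3 ∧ ‖gradient m y - gradient f y‖ ≤ κmg * Δ ^ 2 ∧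
      ‖fderiv ℝ (gradient m) y - fderiv ℝ (gradient f) y‖ ≤ κmh * Δ

/-- Smallest eigenvalue of a symmetric matrix: the minimum of `⟪u, H u⟫` over unit vectors. -/
def lambdaMin {n : ℕ} (H : Matrix (Fin n) (Fin n) ℝ) : ℝ :=
  sInf {r : ℝ | ∃ u : EuclideanSpace ℝ (Fin n), ‖u‖ = 1 ∧ r = ⟪u, mulVecE H u⟫}

/-- `τ(H) = max(-λ_min(H), 0)`. -/
def tau {n : ℕ} (H : Matrix (Fin n) (Fin n) ℝ) : ℝ := max (-lambdaMin H) 0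

/-- Hessian matrix of `f` at `x`. -/
def hessMat {n : ℕ} (f : EuclideanSpace ℝ (Fin n) → ℝ) (x : EuclideanSpace ℝ (Fin n)) :
    Matrix (Fin n) (Fin n) ℝ :=
  Matrix.of fun i j => fderiv ℝ (gradient f) x (EuclideanSpace.single j 1) i

/-- ℓ∞ operator norm of a matrix: the maximum absolute row sum. -/
def linftyNorm {m k : Type*} [Fintype m] [Fintype k] (A : Matrix m k ℝ) : ℝ :=
  sSup (Set.range fun i => ∑ j, |A i j|)


lemma grad_inner {F : Type*} [NormedAddCommGroup F] [InnerProductSpace ℝ F] [CompleteSpace F]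
    (f : F → ℝ) (p v : F) : ⟪gradient f p, v⟫ = fderiv ℝ f p v := by
  rw [gradient, InnerProductSpace.toDual_symm_apply]

lemma descent_lemma {F : Type*} [NormedAddCommGroup F] [InnerProductSpace ℝ F] [CompleteSpace F]
    (f : F → ℝ) (hf : Differentiable ℝ f) (L : NNReal)
    (hLip : LipschitzWith L (gradient f)) (a b : F) :
    |f b - f a - ⟪gradient f a, b - a⟫| ≤ (L : ℝ) / 2 * ‖b - a‖ ^ 2 := by
  set p : ℝ → F := fun t => a + t • (b - a) with hp
  have hline : ∀ t : ℝ, HasDerivAt p (b - a) t := fun t => by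
    simpa [hp] using ((hasDerivAt_id t).smul_const (b - a)).const_add a
  have hφ : ∀ t : ℝ, HasDerivAt (fun t => f (p t)) (⟪gradient f (p t), b - a⟫) t := by
    intro t
    have h1 : HasDerivAt (fun t => f (p t)) (fderiv ℝ f (p t) (b - a)) t :=
      (hf (p t)).hasFDerivAt.comp_hasDerivAt t (hline t)
    rwa [← grad_inner] at h1
  have hgc : Continuous (gradient f) := hLip.continuous
  have hcont : Continuous fun t : ℝ => ⟪gradient f (p t), b - a⟫ := by
    exact (hgc.comp (by fun_prop)).inner continuous_const
  have hint : ∫ t in (0:ℝ)..1, ⟪gradient f (p t), b - a⟫ = f b - f a := by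
    have := intervalIntegral.integral_eq_sub_of_hasDerivAt
      (f := fun t => f (p t)) (fun t _ => hφ t) (hcont.intervalIntegrable 0 1)
    simpa [hp] using this
  have key : f b - f a - ⟪gradient f a, b - a⟫
      = ∫ t in (0:ℝ)..1, (⟪gradient f (p t), b - a⟫ - ⟪gradient f a, b - a⟫) := by
    rw [intervalIntegral.integral_sub (hcont.intervalIntegrable 0 1)
      (intervalIntegrable_const), hint, intervalIntegral.integral_const]
    simp
  rw [key]
  have hb : ∀ t ∈ Set.Ioc (0:ℝ) 1,
      ‖⟪gradient f (p t), b - a⟫ - ⟪gradient f a, b - a⟫‖ ≤ ((L : ℝ) * ‖b - a‖ ^ 2) * t := by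
    intro t ht
    rw [← inner_sub_left]
    calc ‖⟪gradient f (p t) - gradient f a, b - a⟫‖
        ≤ ‖gradient f (p t) - gradient f a‖ * ‖b - a‖ := by
          exact (abs_real_inner_le_norm _ _)
      _ ≤ ((L : ℝ) * (t * ‖b - a‖)) * ‖b - a‖ := by
          apply mul_le_mul_of_nonneg_right _ (norm_nonneg _)
          have := hLip.dist_le_mul (p t) a
          rw [dist_eq_norm, dist_eq_norm] at this
          have hpa : ‖p t - a‖ = t * ‖b - a‖ := by
            simp [hp, norm_smul, abs_of_nonneg ht.1.le]
          rw [hpa] at this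
          exact this
      _ = ((L : ℝ) * ‖b - a‖ ^ 2) * t := by ring
  rw [← Real.norm_eq_abs]
  have hI : ∫ t in (0:ℝ)..1, ((L : ℝ) * ‖b - a‖ ^ 2) * t = (L : ℝ) / 2 * ‖b - a‖ ^ 2 := by
    rw [intervalIntegral.integral_const_mul]
    simp [integral_id]
    ring
  calc ‖∫ t in (0:ℝ)..1, (⟪gradient f (p t), b - a⟫ - ⟪gradient f a, b - a⟫)‖
      ≤ |∫ t in (0:ℝ)..1, ((L : ℝ) * ‖b - a‖ ^ 2) * t| := by
        apply intervalIntegral.norm_integral_le_abs_of_norm_le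
        · rw [MeasureTheory.ae_restrict_iff' measurableSet_uIoc]
          filter_upwards with t ht
          rw [Set.uIoc_of_le (by norm_num : (0:ℝ) ≤ 1)] at ht
          exact hb t ht
        · exact (continuous_const.mul continuous_id).intervalIntegrable 0 1
    _ = (L : ℝ) / 2 * ‖b - a‖ ^ 2 := by
        rw [hI, abs_of_nonneg (by positivity)]

lemma row_sum_le_linfty {m k : Type*} [Fintype m] [Fintype k] (A : Matrix m k ℝ) (i : m) :
    ∑ j, |A i j| ≤ linftyNorm A :=
  le_csSup (Set.finite_range _).bddAbove ⟨i, rfl⟩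

lemma linfty_nonneg {m k : Type*} [Fintype m] [Fintype k] [Nonempty m] (A : Matrix m k ℝ) :
    0 ≤ linftyNorm A := by
  obtain ⟨i⟩ := ‹Nonempty m›
  exact le_trans (Finset.sum_nonneg fun j _ => abs_nonneg _) (row_sum_le_linfty A i)

lemma mulVec_entry_bound {ι : Type*} [Fintype ι] (A : Matrix ι ι ℝ) (r : ι → ℝ) (R : ℝ)
    (hR : 0 ≤ R) (hr : ∀ j, |r j| ≤ R) (k : ι) : |A.mulVec r k| ≤ linftyNorm A * R := by
  calc |A.mulVec r k| = |∑ j, A k j * r j| := rfl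
    _ ≤ ∑ j, |A k j * r j| := Finset.abs_sum_le_sum_abs _ _
    _ ≤ ∑ j, |A k j| * R := by
        refine Finset.sum_le_sum fun j _ => ?_
        rw [abs_mul]
        exact mul_le_mul_of_nonneg_left (hr j) (abs_nonneg _)
    _ = (∑ j, |A k j|) * R := by rw [Finset.sum_mul]
    _ ≤ linftyNorm A * R := mul_le_mul_of_nonneg_right (row_sum_le_linfty A k) hR


/-- A linear interpolation model built from `n+1` points within distance `β·Δ` of `x`,
with invertible scaled interpolation matrix `M̂`, is fully linear in `B(x,Δ)`
(Theorem `thm_fully_linear`). -/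
theorem linear_interpolation_fully_linear {n : ℕ}
    (f : EuclideanSpace ℝ (Fin n) → ℝ) (hf : Differentiable ℝ f)
    (Lg : NNReal) (hLip : LipschitzWith Lg (gradient f))
    (x : EuclideanSpace ℝ (Fin n)) (Δ β : ℝ) (hΔ : 0 < Δ) (hβ : 0 < β)
    (y : Fin (n + 1) → EuclideanSpace ℝ (Fin n))
    (hy : ∀ i, ‖y i - x‖ ≤ β * Δ)
    (Mhat : Matrix (Fin (n + 1)) (Fin (n + 1)) ℝ)
    (hMhat : ∀ i, Mhat i = Fin.cons 1 fun j : Fin n => (y i - x) j / Δ)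
    (hinv : IsUnit Mhat.det)
    (coeff : Fin (n + 1) → ℝ) (hcoeff : coeff = Mhat⁻¹.mulVec fun i => f (y i))
    (c : ℝ) (hc : c = coeff 0)
    (g : EuclideanSpace ℝ (Fin n)) (hg : ∀ j : Fin n, g j = coeff j.succ / Δ)
    (m : EuclideanSpace ℝ (Fin n) → ℝ) (hm : ∀ z, m z = c + ⟪g, z - x⟫) :
    IsFullyLinear f m x Δ
      ((Lg : ℝ) / 2 * (1 + Real.sqrt n) * β ^ 2 * linftyNorm Mhat⁻¹ + (Lg : ℝ) / 2)
      (2 * ((Lg : ℝ) / 2 * (1 + Real.sqrt n) * β ^ 2 * linftyNorm Mhat⁻¹ +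
        (Lg : ℝ) / 2)) := by
  have hΔne : Δ ≠ 0 := hΔ.ne'
  set L : ℝ := (Lg : ℝ) with hLdef
  have hL : 0 ≤ L := Lg.coe_nonneg
  set N : ℝ := linftyNorm Mhat⁻¹ with hNdef
  have hN : 0 ≤ N := linfty_nonneg _
  set R : ℝ := L / 2 * β ^ 2 * Δ ^ 2 with hRdef
  have hR : 0 ≤ R := by positivity
  have hs : 0 ≤ Real.sqrt n := Real.sqrt_nonneg n
  set w : EuclideanSpace ℝ (Fin n) := gradient f x with hw
  -- inner products as sums
  have hip : ∀ (u v : EuclideanSpace ℝ (Fin n)), ⟪u, v⟫ = ∑ j, u j * v j := by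
    intro u v
    simp [PiLp.inner_apply, RCLike.inner_apply, mul_comm]
  -- interpolation identity
  have hMc : Mhat.mulVec coeff = fun i => f (y i) := by
    rw [hcoeff, Matrix.mulVec_mulVec, Matrix.mul_nonsing_inv _ hinv, Matrix.one_mulVec]
  have hinterp : ∀ i, c + ⟪g, y i - x⟫ = f (y i) := by
    intro i
    have h := congrFun hMc i
    simp only [Matrix.mulVec, dotProduct] at h
    rw [Fin.sum_univ_succ, hMhat] at h
    simp only [Fin.cons_zero, Fin.cons_succ, one_mul] at h
    rw [hip, hc]
    rw [← h]
    congr 1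
    refine Finset.sum_congr rfl fun j _ => ?_
    rw [hg]
    field_simp
  -- descent bound at interpolation points
  have hr : ∀ i, |f (y i) - f x - ⟪w, y i - x⟫| ≤ R := by
    intro i
    refine (descent_lemma f hf Lg hLip x (y i)).trans ?_
    have h1 : ‖y i - x‖ ^ 2 ≤ (β * Δ) ^ 2 := pow_le_pow_left₀ (norm_nonneg _) (hy i) 2
    calc L / 2 * ‖y i - x‖ ^ 2 ≤ L / 2 * (β * Δ) ^ 2 :=
          mul_le_mul_of_nonneg_left h1 (by positivity)
      _ = R := by rw [hRdef]; ring
  -- the error vector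
  set v : Fin (n + 1) → ℝ := Fin.cons (c - f x) (fun j => Δ * (g j - w j)) with hv
  have hMv : Mhat.mulVec v = fun i => f (y i) - f x - ⟪w, y i - x⟫ := by
    funext i
    simp only [Matrix.mulVec, dotProduct]
    rw [Fin.sum_univ_succ, hMhat]
    simp only [hv, Fin.cons_zero, Fin.cons_succ, one_mul]
    rw [← hinterp i, hip g, hip w]
    have hterm : ∀ j : Fin n, (y i - x) j / Δ * (Δ * (g j - w j))
        = g j * (y i - x) j - w j * (y i - x) j := by
      intro j; field_simp
    rw [Finset.sum_congr rfl fun j _ => hterm j, Finset.sum_sub_distrib]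
    ring
  have hvr : v = Mhat⁻¹.mulVec fun i => f (y i) - f x - ⟪w, y i - x⟫ := by
    rw [← hMv, Matrix.mulVec_mulVec, Matrix.nonsing_inv_mul _ hinv, Matrix.one_mulVec]
  have hvb : ∀ k, |v k| ≤ N * R := by
    intro k
    rw [hvr]
    exact mulVec_entry_bound _ _ R hR hr k
  have hcb : |c - f x| ≤ N * R := by
    have := hvb 0
    simpa [hv] using this
  have hgj : ∀ j : Fin n, |g j - w j| ≤ N * R / Δ := by
    intro j
    have h := hvb j.succ
    simp only [hv, Fin.cons_succ, abs_mul, abs_of_pos hΔ] at h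
    rw [le_div_iff₀ hΔ, mul_comm]
    exact h
  have hgnorm : ‖g - w‖ ≤ Real.sqrt n * (N * R / Δ) := by
    have h0 : 0 ≤ N * R / Δ := by positivity
    rw [EuclideanSpace.norm_eq]
    calc Real.sqrt (∑ j, ‖(g - w) j‖ ^ 2) ≤ Real.sqrt (∑ _j : Fin n, (N * R / Δ) ^ 2) := by
          apply Real.sqrt_le_sqrt
          refine Finset.sum_le_sum fun j _ => ?_
          rw [PiLp.sub_apply, Real.norm_eq_abs]
          exact pow_le_pow_left₀ (abs_nonneg _) (hgj j) 2
      _ = Real.sqrt n * (N * R / Δ) := by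
          rw [Finset.sum_const, Finset.card_univ, Fintype.card_fin, nsmul_eq_mul,
            Real.sqrt_mul (by positivity), Real.sqrt_sq h0]
  -- gradient of the model
  have hgm : ∀ z, gradient m z = g := by
    intro z
    have hmeq : m = fun z => (c - ⟪g, x⟫) + (InnerProductSpace.toDual ℝ _ g) z := by
      funext z
      rw [hm, InnerProductSpace.toDual_apply_apply, inner_sub_right]
      ring
    have h1 : HasFDerivAt m (InnerProductSpace.toDual ℝ _ g) z := by
      rw [hmeq]
      exact ((InnerProductSpace.toDual ℝ _ g).hasFDerivAt).const_add _
    exact (hasFDerivAt_iff_hasGradientAt.1 h1).gradient.trans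
      ((InnerProductSpace.toDual ℝ _).symm_apply_apply g)
  intro z hz
  rw [mem_closedBall, dist_eq_norm] at hz
  constructor
  · -- function error bound
    have hd := (descent_lemma f hf Lg hLip x z).trans
      (mul_le_mul_of_nonneg_left (pow_le_pow_left₀ (norm_nonneg _) hz 2) (by positivity : (0:ℝ) ≤ L / 2))
    have hCS : |⟪g - w, z - x⟫| ≤ Real.sqrt n * (N * R / Δ) * Δ := by
      refine (abs_real_inner_le_norm _ _).trans ?_
      exact mul_le_mul hgnorm hz (norm_nonneg _) (by positivity)
    have hsplit : m z - f z = (c - f x) + ⟪g - w, z - x⟫ + -(f z - f x - ⟪w, z - x⟫) := by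
      rw [hm, inner_sub_left]
      ring
    rw [hsplit]
    refine (abs_add_three _ _ _).trans ?_
    rw [abs_neg]
    have hRΔ : Real.sqrt n * (N * R / Δ) * Δ = Real.sqrt n * N * R := by
      field_simp
    rw [hRΔ] at hCS
    have : N * R + Real.sqrt n * N * R + L / 2 * Δ ^ 2
        = (L / 2 * (1 + Real.sqrt n) * β ^ 2 * N + L / 2) * Δ ^ 2 := by
      rw [hRdef]; ring
    linarith [hcb, hCS, hd]
  · -- gradient error bound
    rw [hgm z]
    have h1 : ‖g - gradient f z‖ ≤ ‖g - w‖ + ‖w - gradient f z‖ := by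
      calc ‖g - gradient f z‖ = ‖(g - w) + (w - gradient f z)‖ := by abel_nf
        _ ≤ ‖g - w‖ + ‖w - gradient f z‖ := norm_add_le _ _
    have h2 : ‖w - gradient f z‖ ≤ L * Δ := by
      have := hLip.dist_le_mul x z
      rw [dist_eq_norm, dist_eq_norm, norm_sub_rev x z] at this
      exact this.trans (mul_le_mul_of_nonneg_left hz hL)
    have h3 : Real.sqrt n * (N * R / Δ) = Real.sqrt n * N * (L / 2) * β ^ 2 * Δ := by
      rw [hRdef]; field_simp
    rw [h3] at hgnorm
    have hgoal : Real.sqrt n * N * (L / 2) * β ^ 2 * Δ + L * Δ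
        ≤ 2 * (L / 2 * (1 + Real.sqrt n) * β ^ 2 * N + L / 2) * Δ := by
      nlinarith [mul_nonneg (mul_nonneg (mul_nonneg hL hN) (sq_nonneg β)) hΔ.le,
        mul_nonneg (mul_nonneg (mul_nonneg (mul_nonneg hs hL) hN) (sq_nonneg β)) hΔ.le]
    linarith [h1, hgnorm, h2]
end
end

section
/- Let V̂ be an invertible n×n real matrix and let M̂ be the (n+1)×(n+1) real matrix given in block form by M̂ = [[1, 0ᵀ], [e, V̂]], where the top-left block is the 1×1 matrix with entry 1, the top-right block is the zero row, e is the column vector of all ones, and the bottom-right block is V̂. Then M̂ is invertible and ‖M̂⁻¹‖_∞ ≤ max(1, 2·‖V̂⁻¹‖_∞). -/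
open scoped RealInnerProductSpace
open Metric

noncomputable section

set_option maxHeartbeats 1000000 in
/-- For the block interpolation matrix `M̂ = [[1, 0ᵀ], [e, V̂]]` with `V̂` invertible,
`M̂` is invertible and `‖M̂⁻¹‖_∞ ≤ max(1, 2‖V̂⁻¹‖_∞)` (Lemma `lem_linear_sample_estimate`). -/
theorem block_interp_matrix_inv_linfty_bound {n : ℕ}
    (Vhat : Matrix (Fin n) (Fin n) ℝ) (hV : IsUnit Vhat.det)
    (Mhat : Matrix (Unit ⊕ Fin n) (Unit ⊕ Fin n) ℝ)
    (hM : Mhat = Matrix.fromBlocks (Matrix.of fun _ _ => (1 : ℝ)) 0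
      (Matrix.of fun _ _ => (1 : ℝ)) Vhat) :
    IsUnit Mhat.det ∧ linftyNorm Mhat⁻¹ ≤ max 1 (2 * linftyNorm Vhat⁻¹) := by
  have hA : (Matrix.of fun _ _ => (1 : ℝ) : Matrix Unit Unit ℝ) = 1 := by
    ext i j
    simp [Matrix.one_apply, Subsingleton.elim i j]
  have hdet : Mhat.det = Vhat.det := by
    rw [hM, hA, Matrix.det_fromBlocks_zero₁₂, Matrix.det_one, one_mul]
  refine ⟨hdet ▸ hV, ?_⟩
  -- explicit inverse
  set E : Matrix (Fin n) Unit ℝ := Matrix.of fun _ _ => (1 : ℝ) with hE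
  have hinv : Mhat⁻¹ = Matrix.fromBlocks 1 0 (-(Vhat⁻¹ * E)) Vhat⁻¹ := by
    apply Matrix.inv_eq_right_inv
    have hVV : Vhat * Vhat⁻¹ = 1 := Matrix.mul_nonsing_inv _ hV
    rw [hM, hA, Matrix.fromBlocks_multiply]
    have h21 : E * (1 : Matrix Unit Unit ℝ) + Vhat * -(Vhat⁻¹ * E) = 0 := by
      rw [Matrix.mul_one, Matrix.mul_neg, ← Matrix.mul_assoc, hVV, Matrix.one_mul,
        add_neg_cancel]
    rw [h21, hVV, Matrix.mul_one, Matrix.zero_mul, add_zero, Matrix.mul_zero, Matrix.zero_mul,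
      add_zero, Matrix.mul_zero, zero_add, ← Matrix.fromBlocks_one]
  rw [hinv]
  -- bound row sums
  have hrow : ∀ i, ∑ j, |Vhat⁻¹ i j| ≤ linftyNorm Vhat⁻¹ := fun i =>
    le_csSup (Set.finite_range _).bddAbove ⟨i, rfl⟩
  apply Real.sSup_le
  · rintro r ⟨i, rfl⟩
    dsimp only
    rcases i with u | i
    · have : (∑ j, |Matrix.fromBlocks (1 : Matrix Unit Unit ℝ) 0 (-(Vhat⁻¹ * E)) Vhat⁻¹
          (Sum.inl u) j|) = 1 := by
        rw [Fintype.sum_sum_type]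
        simp [Matrix.fromBlocks, Matrix.one_apply, Subsingleton.elim]
      rw [this]
      exact le_max_left _ _
    · refine le_trans ?_ (le_max_right _ _)
      rw [Fintype.sum_sum_type]
      have h1 : (∑ u : Unit, |Matrix.fromBlocks (1 : Matrix Unit Unit ℝ) 0 (-(Vhat⁻¹ * E)) Vhat⁻¹
          (Sum.inr i) (Sum.inl u)|) = |∑ j, Vhat⁻¹ i j| := by
        simp [Matrix.fromBlocks, Matrix.mul_apply, hE]
      have h2 : (∑ j, |Matrix.fromBlocks (1 : Matrix Unit Unit ℝ) 0 (-(Vhat⁻¹ * E)) Vhat⁻¹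
          (Sum.inr i) (Sum.inr j)|) = ∑ j, |Vhat⁻¹ i j| := by
        simp [Matrix.fromBlocks]
      rw [h1, h2, two_mul]
      have habs : |∑ j, Vhat⁻¹ i j| ≤ ∑ j, |Vhat⁻¹ i j| := Finset.abs_sum_le_sum_abs _ _
      have := hrow i
      linarith
  · exact le_trans zero_le_one (le_max_left _ _)
end
end

section
/- Let C ⊆ EuclideanSpace ℝ (Fin n) be a nonempty closed convex set, let x ∈ C, and let f : EuclideanSpace ℝ (Fin n) → ℝ be differentiable at x. Define D(x) := {d : x + d ∈ C and ‖d‖ ≤ 1}, which is nonempty (0 ∈ D(x)) and compact, and for a vector v ∈ EuclideanSpace ℝ (Fin n) define the criticality measure π(v) := |min {⟨v, d⟩ : d ∈ D(x)}|. Suppose g ∈ EuclideanSpace ℝ (Fin n), Δ > 0, and κ_mg > 0 satisfy |⟨g − ∇f(x), d⟩| ≤ κ_mg·Δ for all d ∈ D(x). Then |π(∇f(x)) − π(g)| ≤ κ_mg·Δ. -/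
open scoped RealInnerProductSpace
open Metric

noncomputable section

/-- Accuracy of the convex-constrained criticality measure under the gradient accuracy
condition (Lemma `lem_convex_crit_measure`). -/
theorem convex_criticality_measure_error {n : ℕ}
    (C : Set (EuclideanSpace ℝ (Fin n))) (hCclosed : IsClosed C) (hCconv : Convex ℝ C)
    (x : EuclideanSpace ℝ (Fin n)) (hx : x ∈ C)
    (f : EuclideanSpace ℝ (Fin n) → ℝ) (hf : DifferentiableAt ℝ f x)
    (D : Set (EuclideanSpace ℝ (Fin n)))
    (hD : D = {d : EuclideanSpace ℝ (Fin n) | x + d ∈ C ∧ ‖d‖ ≤ 1})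
    (pim : EuclideanSpace ℝ (Fin n) → ℝ)
    (hpim : ∀ v, pim v = |sInf ((fun d => ⟪v, d⟫) '' D)|)
    (g : EuclideanSpace ℝ (Fin n)) (Δ κmg : ℝ) (hΔ : 0 < Δ) (hκmg : 0 < κmg)
    (hacc : ∀ d ∈ D, |⟪g - gradient f x, d⟫| ≤ κmg * Δ) :
    |pim (gradient f x) - pim g| ≤ κmg * Δ := by
  have h0 : (0 : EuclideanSpace ℝ (Fin n)) ∈ D := by
    rw [hD]; simp [hx]
  have hne : ∀ v : EuclideanSpace ℝ (Fin n),
      ((fun d => ⟪v, d⟫) '' D).Nonempty := fun v => ⟨_, ⟨0, h0, rfl⟩⟩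
  have hbdd : ∀ v : EuclideanSpace ℝ (Fin n),
      BddBelow ((fun d => ⟪v, d⟫) '' D) := by
    intro v
    refine ⟨-‖v‖, ?_⟩
    rintro r ⟨d, hd, rfl⟩
    have hd1 : ‖d‖ ≤ 1 := (hD ▸ hd).2
    have h1 := abs_real_inner_le_norm v d
    have h2 : ‖v‖ * ‖d‖ ≤ ‖v‖ * 1 := by
      have := norm_nonneg v
      nlinarith
    have := neg_abs_le (⟪v, d⟫ : ℝ)
    simp only at *
    linarith
  have hkey : ∀ a b : EuclideanSpace ℝ (Fin n),
      (∀ d ∈ D, ⟪a, d⟫ ≤ ⟪b, d⟫ + κmg * Δ) →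
      sInf ((fun d => ⟪a, d⟫) '' D) ≤ sInf ((fun d => ⟪b, d⟫) '' D) + κmg * Δ := by
    intro a b h
    rw [← sub_le_iff_le_add]
    apply le_csInf (hne b)
    rintro r ⟨d, hd, rfl⟩
    have h1 := csInf_le (hbdd a) ⟨d, hd, rfl⟩
    have h2 := h d hd
    simp only at *
    linarith
  have hab : ∀ d ∈ D, ⟪gradient f x, d⟫ ≤ ⟪g, d⟫ + κmg * Δ := by
    intro d hd
    have h1 := hacc d hd
    rw [inner_sub_left] at h1
    have := abs_le.mp h1
    linarith [this.1]
  have hba : ∀ d ∈ D, ⟪g, d⟫ ≤ ⟪gradient f x, d⟫ + κmg * Δ := by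
    intro d hd
    have h1 := hacc d hd
    rw [inner_sub_left] at h1
    have := abs_le.mp h1
    linarith [this.2]
  have k1 := hkey _ _ hab
  have k2 := hkey _ _ hba
  rw [hpim, hpim]
  have habs := abs_abs_sub_abs_le_abs_sub (sInf ((fun d => ⟪gradient f x, d⟫) '' D))
    (sInf ((fun d => ⟪g, d⟫) '' D))
  refine habs.trans ?_
  rw [abs_le]
  constructor <;> linarith
end
end

section
/- Let f : EuclideanSpace ℝ (Fin n) → ℝ be twice continuously differentiable, let x ∈ EuclideanSpace ℝ (Fin n), h > 0, and M > 0 be such that the Hessian satisfies ‖∇²f(y)‖ ≤ M (operator norm) for all y in the closed ball B(x,h). Let f̃ : EuclideanSpace ℝ (Fin n) → ℝ and ε_f > 0 satisfy |f̃(y) − f(y)| ≤ ε_f for all y. Define g ∈ EuclideanSpace ℝ (Fin n) by g_i := (f̃(x + h·e_i) − f̃(x))/h for i = 1, …, n, where e_1, …, e_n is the standard orthonormal basis. Then for every i, |g_i − ⟨∇f(x), e_i⟩| ≤ M·h/2 + 2·ε_f/h; that is, ‖g − ∇f(x)‖_∞ ≤ M·h/2 + 2·ε_f/h. -/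
open scoped RealInnerProductSpace
open Metric

noncomputable section

theorem taylor_bound' {n : ℕ} (f : EuclideanSpace ℝ (Fin n) → ℝ) (hf : ContDiff ℝ 2 f)
    (x v : EuclideanSpace ℝ (Fin n)) (M : ℝ) (hM : 0 ≤ M)
    (hb : ∀ y ∈ closedBall x ‖v‖, ‖fderiv ℝ (gradient f) y‖ ≤ M) :
    |f (x + v) - f x - fderiv ℝ f x v| ≤ M * ‖v‖ ^ 2 / 2 := by
  have hd : Differentiable ℝ f := hf.differentiable two_ne_zero
  have key : ∀ (y w : EuclideanSpace ℝ (Fin n)), fderiv ℝ f y w = ⟪gradient f y, w⟫ :=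
    fun y w => (InnerProductSpace.toDual_symm_apply).symm
  have h1 : ContDiff ℝ 1 (fderiv ℝ f) := hf.fderiv_right (le_refl 2)
  have hgradD : Differentiable ℝ (gradient f) := by
    have : ContDiff ℝ 1 (gradient f) :=
      ((InnerProductSpace.toDual ℝ (EuclideanSpace ℝ (Fin n))).symm.contDiff).comp h1
    exact this.differentiable one_ne_zero
  have hlip : ∀ y ∈ closedBall x ‖v‖, ‖gradient f y - gradient f x‖ ≤ M * ‖y - x‖ := by
    intro y hy
    exact (convex_closedBall x ‖v‖).norm_image_sub_le_of_norm_fderiv_le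
      (fun z _ => hgradD z) hb (mem_closedBall_self (norm_nonneg v)) hy
  set c : ℝ := fderiv ℝ f x v with hc
  set ψ : ℝ → ℝ := fun t => f (x + t • v) - t * c - f x with hψdef
  have hmem : ∀ t : ℝ, 0 ≤ t → t ≤ 1 → x + t • v ∈ closedBall x ‖v‖ := by
    intro t ht0 ht1
    simp only [mem_closedBall, dist_eq_norm, add_sub_cancel_left, norm_smul, Real.norm_eq_abs]
    calc |t| * ‖v‖ ≤ 1 * ‖v‖ := by
          apply mul_le_mul_of_nonneg_right _ (norm_nonneg v)
          rw [abs_of_nonneg ht0]; exact ht1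
      _ = ‖v‖ := one_mul _
  have hψ' : ∀ t : ℝ, HasDerivAt ψ (fderiv ℝ f (x + t • v) v - c) t := by
    intro t
    have hline : HasDerivAt (fun t : ℝ => x + t • v) v t := by
      simpa using ((hasDerivAt_id t).smul_const v).const_add x
    have h2 := (hd (x + t • v)).hasFDerivAt.comp_hasDerivAt t hline
    have h3 : HasDerivAt (fun t : ℝ => t * c) c t := hasDerivAt_mul_const c
    simpa [hψdef] using (h2.sub h3).sub_const (f x)
  have bound : ∀ t : ℝ, t ∈ Set.Ico (0:ℝ) 1 → ‖fderiv ℝ f (x + t • v) v - c‖ ≤ M * ‖v‖ ^ 2 * t := by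
    intro t ht
    have hmt := hmem t ht.1 ht.2.le
    have : fderiv ℝ f (x + t • v) v - c = ⟪gradient f (x + t • v) - gradient f x, v⟫ := by
      rw [inner_sub_left, hc, key, key]
    rw [this, Real.norm_eq_abs]
    calc |⟪gradient f (x + t • v) - gradient f x, v⟫|
        ≤ ‖gradient f (x + t • v) - gradient f x‖ * ‖v‖ := abs_real_inner_le_norm _ _
      _ ≤ (M * ‖x + t • v - x‖) * ‖v‖ :=
          mul_le_mul_of_nonneg_right (hlip _ hmt) (norm_nonneg v)
      _ = M * ‖v‖ ^ 2 * t := by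
          rw [add_sub_cancel_left, norm_smul, Real.norm_eq_abs, abs_of_nonneg ht.1]; ring
  have hBd : ∀ t : ℝ, HasDerivAt (fun t : ℝ => M * ‖v‖ ^ 2 / 2 * t ^ 2) (M * ‖v‖ ^ 2 * t) t := by
    intro t
    have := (hasDerivAt_pow 2 t).const_mul (M * ‖v‖ ^ 2 / 2)
    refine this.congr_deriv ?_
    push_cast; ring
  have main := image_norm_le_of_norm_deriv_right_le_deriv_boundary
    (f := ψ) (f' := fun t => fderiv ℝ f (x + t • v) v - c) (a := 0) (b := 1)
    (fun t _ => (hψ' t).continuousAt.continuousWithinAt)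
    (fun t ht => (hψ' t).hasDerivWithinAt)
    (B := fun t => M * ‖v‖ ^ 2 / 2 * t ^ 2) (B' := fun t => M * ‖v‖ ^ 2 * t)
    (by simp [hψdef]) hBd bound
  have h1' := main (Set.right_mem_Icc.2 zero_le_one)
  simpa [hψdef, sub_right_comm] using h1'

/-- Error bound for forward finite differencing of a noisy zeroth-order oracle
(Lemma `lem_noisy_fin_diff`). -/
theorem noisy_finite_difference_error {n : ℕ}
    (f : EuclideanSpace ℝ (Fin n) → ℝ) (hf : ContDiff ℝ 2 f)
    (x : EuclideanSpace ℝ (Fin n)) (h : ℝ) (hh : 0 < h)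
    (M : ℝ) (hM : 0 < M)
    (hHess : ∀ y ∈ closedBall x h, ‖fderiv ℝ (gradient f) y‖ ≤ M)
    (ftil : EuclideanSpace ℝ (Fin n) → ℝ) (εf : ℝ) (hεf : 0 < εf)
    (hnoise : ∀ y, |ftil y - f y| ≤ εf)
    (g : EuclideanSpace ℝ (Fin n))
    (hg : ∀ i : Fin n,
      g i = (ftil (x + h • EuclideanSpace.single i 1) - ftil x) / h) :
    ∀ i : Fin n,
      |g i - ⟪gradient f x, EuclideanSpace.single i 1⟫| ≤ M * h / 2 + 2 * εf / h := by
  intro i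
  set e : EuclideanSpace ℝ (Fin n) := EuclideanSpace.single i 1 with he
  set v : EuclideanSpace ℝ (Fin n) := h • e with hv
  have hnv : ‖v‖ = h := by
    rw [hv, norm_smul, he, EuclideanSpace.norm_single]
    simp [abs_of_pos hh]
  have hb' : ∀ y ∈ closedBall x ‖v‖, ‖fderiv ℝ (gradient f) y‖ ≤ M := by
    rw [hnv]; exact hHess
  have htay := taylor_bound' f hf x v M hM.le hb'
  rw [hnv] at htay
  have keyx : fderiv ℝ f x v = h * ⟪gradient f x, e⟫ := by
    rw [show (fderiv ℝ f x) v = ⟪gradient f x, v⟫ from (InnerProductSpace.toDual_symm_apply).symm,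
      hv, real_inner_smul_right]
  have hdecomp : g i - ⟪gradient f x, e⟫ =
      ((f (x + v) - f x - fderiv ℝ f x v) + (ftil (x + v) - f (x + v)) - (ftil x - f x)) / h := by
    rw [hg i, keyx]
    field_simp
    ring
  rw [hdecomp, abs_div, abs_of_pos hh, div_le_iff₀ hh]
  have hrh : (M * h / 2 + 2 * εf / h) * h = M * h ^ 2 / 2 + 2 * εf := by
    field_simp
  rw [hrh, abs_le]
  have e1 := abs_le.mp htay
  have e2 := abs_le.mp (hnoise (x + v))
  have e3 := abs_le.mp (hnoise x)
  constructor <;> linarith [e1.1, e1.2, e2.1, e2.2, e3.1, e3.2]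
end
end

section
/- Let x ∈ EuclideanSpace ℝ (Fin n), Δ > 0, ε > 0, and for i ∈ {1,2} let m_i(y) := c_i + ⟨g_i, y − x⟩ + (1/2)·⟨y − x, H_i·(y − x)⟩ with c_i ∈ ℝ, g_i ∈ EuclideanSpace ℝ (Fin n), and H_i a symmetric n×n real matrix. If |m_1(y) − m_2(y)| ≤ ε for all y in the closed ball B(x,Δ), then |c_1 − c_2| ≤ ε, ‖g_1 − g_2‖ ≤ 10·ε/Δ, and ‖H_1 − H_2‖ ≤ 24·ε/Δ², where ‖H_1 − H_2‖ is the operator norm induced by the Euclidean vector norm. -/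
open scoped RealInnerProductSpace
open Metric

noncomputable section

lemma inner_mulVecE {n : ℕ} (H : Matrix (Fin n) (Fin n) ℝ) (v w : EuclideanSpace ℝ (Fin n)) :
    ⟪v, mulVecE H w⟫ = dotProduct (v : Fin n → ℝ) (H.mulVec w) := by
  simp [mulVecE, PiLp.inner_apply, dotProduct, mul_comm]; exact Finset.sum_congr rfl fun i _ => mul_comm _ _

lemma mulVecE_sub {n : ℕ} (A B : Matrix (Fin n) (Fin n) ℝ) (v : EuclideanSpace ℝ (Fin n)) :
    mulVecE (A - B) v = mulVecE A v - mulVecE B v := by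
  simp [mulVecE, Matrix.sub_mulVec, map_sub]

lemma mulVecE_neg {n : ℕ} (A : Matrix (Fin n) (Fin n) ℝ) (v : EuclideanSpace ℝ (Fin n)) :
    mulVecE A (-v) = -mulVecE A v := by
  simp [mulVecE, Matrix.mulVec_neg]

lemma mulVecE_smul {n : ℕ} (A : Matrix (Fin n) (Fin n) ℝ) (r : ℝ) (v : EuclideanSpace ℝ (Fin n)) :
    mulVecE A (r • v) = r • mulVecE A v := by
  simp [mulVecE, Matrix.mulVec_smul]

lemma mulVecE_add {n : ℕ} (A : Matrix (Fin n) (Fin n) ℝ) (u v : EuclideanSpace ℝ (Fin n)) :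
    mulVecE A (u + v) = mulVecE A u + mulVecE A v := by
  simp [mulVecE, Matrix.mulVec_add]

lemma mulVecE_sub_vec {n : ℕ} (A : Matrix (Fin n) (Fin n) ℝ) (u v : EuclideanSpace ℝ (Fin n)) :
    mulVecE A (u - v) = mulVecE A u - mulVecE A v := by
  rw [sub_eq_add_neg, mulVecE_add, mulVecE_neg, sub_eq_add_neg]

lemma inner_mulVecE_symm {n : ℕ} (H : Matrix (Fin n) (Fin n) ℝ) (hH : H.IsSymm)
    (v w : EuclideanSpace ℝ (Fin n)) :
    ⟪v, mulVecE H w⟫ = ⟪w, mulVecE H v⟫ := by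
  rw [inner_mulVecE, inner_mulVecE, Matrix.dotProduct_mulVec, ← Matrix.mulVec_transpose,
    hH.eq, dotProduct_comm]


/-- Two quadratic functions that are uniformly close on a ball have close constant,
gradient, and Hessian coefficients (Lemma `lem_difference_of_quadratic`). -/
theorem difference_of_quadratic_models {n : ℕ}
    (x : EuclideanSpace ℝ (Fin n)) (Δ ε : ℝ) (hΔ : 0 < Δ) (hε : 0 < ε)
    (c₁ c₂ : ℝ) (g₁ g₂ : EuclideanSpace ℝ (Fin n))
    (H₁ H₂ : Matrix (Fin n) (Fin n) ℝ) (hH₁ : H₁.IsSymm) (hH₂ : H₂.IsSymm)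
    (hclose : ∀ y ∈ closedBall x Δ,
      |(c₁ + ⟪g₁, y - x⟫ + (1 / 2) * ⟪y - x, mulVecE H₁ (y - x)⟫) -
        (c₂ + ⟪g₂, y - x⟫ + (1 / 2) * ⟪y - x, mulVecE H₂ (y - x)⟫)| ≤ ε) :
    |c₁ - c₂| ≤ ε ∧ ‖g₁ - g₂‖ ≤ 10 * ε / Δ ∧ opNorm (H₁ - H₂) ≤ 24 * ε / Δ ^ 2 := by
  set c : ℝ := c₁ - c₂ with hc
  set g : EuclideanSpace ℝ (Fin n) := g₁ - g₂ with hgdef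
  set H : Matrix (Fin n) (Fin n) ℝ := H₁ - H₂ with hHdef
  have hHs : H.IsSymm := by
    rw [Matrix.IsSymm, hHdef, Matrix.transpose_sub, hH₁.eq, hH₂.eq]
  have hφ : ∀ d : EuclideanSpace ℝ (Fin n), ‖d‖ ≤ Δ →
      |c + ⟪g, d⟫ + (1 / 2) * ⟪d, mulVecE H d⟫| ≤ ε := by
    intro d hd
    have hmem : x + d ∈ closedBall x Δ := by
      simpa [mem_closedBall, dist_eq_norm] using hd
    have h := hclose (x + d) hmem
    have he : x + d - x = d := by abel
    rw [he] at h
    have heq : c + ⟪g, d⟫ + (1 / 2) * ⟪d, mulVecE H d⟫ =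
        (c₁ + ⟪g₁, d⟫ + (1 / 2) * ⟪d, mulVecE H₁ d⟫) -
          (c₂ + ⟪g₂, d⟫ + (1 / 2) * ⟪d, mulVecE H₂ d⟫) := by
      rw [hc, hgdef, hHdef, mulVecE_sub, inner_sub_left, inner_sub_right]; ring
    rw [heq]; exact h
  have h0 : |c| ≤ ε := by
    have := hφ 0 (by simp [le_of_lt hΔ])
    simpa using this
  have hg : ∀ d : EuclideanSpace ℝ (Fin n), ‖d‖ ≤ Δ → |⟪g, d⟫| ≤ ε := by
    intro d hd
    have h1 := hφ d hd
    have h2 := hφ (-d) (by simpa using hd)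
    rw [inner_neg_right, mulVecE_neg, inner_neg_neg] at h2
    rw [abs_le] at h1 h2 ⊢
    constructor <;> linarith
  have hgn : ‖g‖ ≤ ε / Δ := by
    rcases eq_or_ne g 0 with h | h
    · simp [h]; positivity
    · have hgpos : (0:ℝ) < ‖g‖ := norm_pos_iff.mpr h
      have hkey := hg ((Δ / ‖g‖) • g) (by
        rw [norm_smul, Real.norm_eq_abs, abs_of_pos (by positivity),
          div_mul_cancel₀ _ (ne_of_gt hgpos)])
      rw [real_inner_smul_right, real_inner_self_eq_norm_sq] at hkey
      have h2 : Δ / ‖g‖ * ‖g‖ ^ 2 = Δ * ‖g‖ := by field_simp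
      rw [h2, abs_of_nonneg (by positivity)] at hkey
      rw [le_div_iff₀ hΔ]
      nlinarith
  have hQ : ∀ d : EuclideanSpace ℝ (Fin n), ‖d‖ ≤ Δ → |⟪d, mulVecE H d⟫| ≤ 4 * ε := by
    intro d hd
    have h1 := hφ d hd
    have h2 := hφ (-d) (by simpa using hd)
    rw [inner_neg_right, mulVecE_neg, inner_neg_neg] at h2
    rw [abs_le] at h0 h1 h2 ⊢
    constructor <;> linarith
  have hQh : ∀ w : EuclideanSpace ℝ (Fin n),
      |⟪w, mulVecE H w⟫| ≤ 4 * ε / Δ ^ 2 * ‖w‖ ^ 2 := by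
    intro w
    rcases eq_or_ne w 0 with h | h
    · simp [h]
    · have hwpos : (0:ℝ) < ‖w‖ := norm_pos_iff.mpr h
      have hkey := hQ ((Δ / ‖w‖) • w) (by
        rw [norm_smul, Real.norm_eq_abs, abs_of_pos (by positivity),
          div_mul_cancel₀ _ (ne_of_gt hwpos)])
      rw [mulVecE_smul, real_inner_smul_left, real_inner_smul_right] at hkey
      have h2 : Δ / ‖w‖ * (Δ / ‖w‖ * ⟪w, mulVecE H w⟫) =
          (Δ ^ 2 / ‖w‖ ^ 2) * ⟪w, mulVecE H w⟫ := by ring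
      rw [h2, abs_mul, abs_of_nonneg (by positivity)] at hkey
      have h3 : Δ ^ 2 * |⟪w, mulVecE H w⟫| ≤ 4 * ε * ‖w‖ ^ 2 := by
        rw [div_mul_eq_mul_div, div_le_iff₀ (by positivity)] at hkey
        linarith
      rw [div_mul_eq_mul_div, le_div_iff₀ (by positivity)]
      linarith
  refine ⟨h0, le_trans hgn (by gcongr; linarith), ?_⟩
  apply Real.sSup_le
  · rintro r ⟨v, hv, rfl⟩
    by_cases hz : mulVecE H v = 0
    · rw [hz]; simp; positivity
    · have hnz : ‖mulVecE H v‖ ≠ 0 := norm_ne_zero_iff.mpr hz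
      set u : EuclideanSpace ℝ (Fin n) := ‖mulVecE H v‖⁻¹ • (mulVecE H v) with hu
      have hun : ‖u‖ = 1 := norm_smul_inv_norm hz
      have hinner : ⟪u, mulVecE H v⟫ = ‖mulVecE H v‖ := by
        rw [hu, real_inner_smul_left, real_inner_self_eq_norm_sq, sq,
          inv_mul_cancel_left₀ hnz]
      have hs : ⟪v, mulVecE H u⟫ = ⟪u, mulVecE H v⟫ := inner_mulVecE_symm H hHs v u
      have e1 : ⟪u + v, mulVecE H (u + v)⟫ = ⟪u, mulVecE H u⟫ + ⟪u, mulVecE H v⟫ +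
          ⟪v, mulVecE H u⟫ + ⟪v, mulVecE H v⟫ := by
        rw [mulVecE_add, inner_add_left, inner_add_right, inner_add_right]; ring
      have e2 : ⟪u - v, mulVecE H (u - v)⟫ = ⟪u, mulVecE H u⟫ - ⟪u, mulVecE H v⟫ -
          ⟪v, mulVecE H u⟫ + ⟪v, mulVecE H v⟫ := by
        rw [mulVecE_sub_vec, inner_sub_left, inner_sub_right, inner_sub_right]; ring
      have pol : 4 * ⟪u, mulVecE H v⟫ =
          ⟪u + v, mulVecE H (u + v)⟫ - ⟪u - v, mulVecE H (u - v)⟫ := by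
        rw [e1, e2]; linarith
      have hb1 := hQh (u + v)
      have hb2 := hQh (u - v)
      have hpar : ‖u + v‖ ^ 2 + ‖u - v‖ ^ 2 = 2 * (‖u‖ ^ 2 + ‖v‖ ^ 2) := by
        rw [norm_add_sq_real, norm_sub_sq_real]; ring
      have hv2 : ‖v‖ ^ 2 ≤ 1 := by nlinarith [norm_nonneg v]
      have hsum : ‖u + v‖ ^ 2 + ‖u - v‖ ^ 2 ≤ 4 := by
        rw [hpar, hun]; linarith
      have hbound : 4 * ⟪u, mulVecE H v⟫ ≤ 16 * ε / Δ ^ 2 := by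
        rw [pol]
        have hchain : ⟪u + v, mulVecE H (u + v)⟫ - ⟪u - v, mulVecE H (u - v)⟫ ≤
            4 * ε / Δ ^ 2 * ‖u + v‖ ^ 2 + 4 * ε / Δ ^ 2 * ‖u - v‖ ^ 2 := by
          have := abs_le.mp hb1
          have := abs_le.mp hb2
          linarith
        have hpos : (0:ℝ) ≤ 4 * ε / Δ ^ 2 := by positivity
        have hm := mul_le_mul_of_nonneg_left hsum hpos
        have hr : 4 * ε / Δ ^ 2 * (‖u + v‖ ^ 2 + ‖u - v‖ ^ 2) =
            4 * ε / Δ ^ 2 * ‖u + v‖ ^ 2 + 4 * ε / Δ ^ 2 * ‖u - v‖ ^ 2 := by ring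
        have hr4 : 4 * ε / Δ ^ 2 * (4:ℝ) = 16 * ε / Δ ^ 2 := by ring
        rw [hr, hr4] at hm
        linarith
      rw [← hinner]
      have h16 : 16 * ε / Δ ^ 2 = 4 * (4 * ε / Δ ^ 2) := by ring
      have h24 : 4 * ε / Δ ^ 2 ≤ 24 * ε / Δ ^ 2 := by gcongr; linarith
      linarith
  · positivity
end
end
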